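/- Let $H, K$ be Hilbert spaces, $F: D \subset H \to K$ with derivative $F'$ Lipschitz with constant $L$ on the convex set $D$. Suppose $x^\dagger \in D$ satisfies $F(x^\dagger) = \mathcal{M}$ and the source condition $x^\dagger - x_0 = F'(x^\dagger)^* w$ with $L\|w\|_K < 1$. Then any minimizer $x_\alpha \in D$ of $J_\alpha(x) = \|F(x)-\mathcal{M}\|_K^2 + \alpha\|x - x_0\|_H^2$ satisfies $\|x_\alpha - x^\dagger\|_H \le C\sqrt{\alpha}$ and $\|F(x_\alpha) - \mathcal{M}\|_K \le C\alpha$ for a constant $C$ depending only on $\|w\|$ and $L$. -/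

import Mathlib

open Set

lemma taylor_remainder {H K : Type*} [NormedAddCommGroup H] [InnerProductSpace ℝ H]
    [NormedAddCommGroup K] [InnerProductSpace ℝ K]
    (D : Set H) (hD : Convex ℝ D) (F : H → K) (F' : H → H →L[ℝ] K) (L : ℝ)
    (hLip : ∀ x₁ ∈ D, ∀ x₂ ∈ D, ‖F' x₁ - F' x₂‖ ≤ L * ‖x₁ - x₂‖)
    (hdiff : ∀ x ∈ D, ∀ h : H, HasDerivAt (fun t : ℝ => F (x + t • h)) (F' x h) 0)
    {x y : H} (hx : x ∈ D) (hy : y ∈ D) :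
    ‖F y - F x - F' x (y - x)‖ ≤ L / 2 * ‖y - x‖ ^ 2 := by
  set h := y - x with hh
  have hmem : ∀ t ∈ Icc (0:ℝ) 1, x + t • h ∈ D := fun t ht => hD.add_smul_sub_mem hx hy ht
  set φ : ℝ → K := fun t => F (x + t • h) - F x - t • (F' x h) with hφ
  have hderiv : ∀ t ∈ Icc (0:ℝ) 1, HasDerivAt φ ((F' (x + t • h) - F' x) h) t := by
    intro t ht
    have h1 := hdiff (x + t • h) (hmem t ht) h
    have h1' : HasDerivAt (fun s : ℝ => F (x + t • h + s • h)) (F' (x + t • h) h) (t - t) := by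
      rw [sub_self]; exact h1
    have h3 : HasDerivAt (fun u : ℝ => F (x + t • h + (u - t) • h)) (F' (x + t • h) h) t :=
      h1'.comp_sub_const t t
    have h4 : HasDerivAt (fun u : ℝ => F (x + u • h)) (F' (x + t • h) h) t := by
      convert h3 using 2 with u
      congr 1
      module
    have h5 : HasDerivAt (fun u : ℝ => u • (F' x h)) (F' x h) t := by
      simpa using (hasDerivAt_id t).smul_const (F' x h)
    exact (h4.sub_const (F x)).sub h5
  have key : ∀ t ∈ Icc (0:ℝ) 1, ‖φ t‖ ≤ L / 2 * ‖h‖ ^ 2 * t ^ 2 := by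
    intro t ht
    refine image_norm_le_of_norm_deriv_right_le_deriv_boundary
      (f' := fun t => (F' (x + t • h) - F' x) h)
      (B := fun t => L / 2 * ‖h‖ ^ 2 * t ^ 2) (B' := fun t => L * ‖h‖ ^ 2 * t)
      ?_ ?_ ?_ ?_ ?_ ht
    · exact fun s hs => ((hderiv s hs).continuousAt).continuousWithinAt
    · exact fun s hs => ((hderiv s (Ico_subset_Icc_self hs)).hasDerivWithinAt)
    · simp [hφ]
    · intro s
      have : HasDerivAt (fun t : ℝ => L / 2 * ‖h‖ ^ 2 * t ^ 2) (L / 2 * ‖h‖ ^ 2 * (2 * s)) s := by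
        simpa using (hasDerivAt_pow 2 s).const_mul (L / 2 * ‖h‖ ^ 2)
      convert this using 1; ring
    · intro s hs
      show ‖(F' (x + s • h) - F' x) h‖ ≤ L * ‖h‖ ^ 2 * s
      have h1 : ‖(F' (x + s • h) - F' x) h‖ ≤ ‖F' (x + s • h) - F' x‖ * ‖h‖ :=
        (F' (x + s • h) - F' x).le_opNorm h
      have h2 : ‖F' (x + s • h) - F' x‖ ≤ L * ‖s • h‖ := by
        simpa using hLip _ (hmem s (Ico_subset_Icc_self hs)) _ hx
      rw [norm_smul, Real.norm_eq_abs, abs_of_nonneg hs.1] at h2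
      nlinarith [norm_nonneg h, norm_nonneg ((F' (x + s • h) - F' x) h), hs.1,
        mul_le_mul_of_nonneg_right h2 (norm_nonneg h)]
  have hxy : x + h = y := by rw [hh]; abel
  have := key 1 (by norm_num)
  simpa [hφ, hxy] using this


open RealInnerProductSpace

set_option maxHeartbeats 1000000

/-- Convergence rates for nonlinear Tikhonov regularization
(Engl–Kunisch–Neubauer) with exact data.  Let `H, K` be real Hilbert spaces, `D ⊆ H`
convex, `F : D → K` Gateaux differentiable with derivative `F'` Lipschitz with constant
`L` on `D`.  Suppose `x† ∈ D` satisfies `F(x†) = 𝓜` and the source condition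
`x† - x₀ = F'(x†)* w` with `L‖w‖ < 1`.  Then there is a constant `C` depending only on
`‖w‖` and `L` such that every minimizer `x_α ∈ D` of
`J_α(x) = ‖F x - 𝓜‖² + α‖x - x₀‖²` over `D` satisfies `‖x_α - x†‖ ≤ C√α` and
`‖F x_α - 𝓜‖ ≤ C α`. -/
theorem tikhonov_convergence_rates
    {H K : Type*}
    [NormedAddCommGroup H] [InnerProductSpace ℝ H] [CompleteSpace H]
    [NormedAddCommGroup K] [InnerProductSpace ℝ K] [CompleteSpace K]
    (D : Set H) (hD : Convex ℝ D)
    (F : H → K) (F' : H → H →L[ℝ] K) (L : ℝ) (hL : 0 < L)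
    (hLip : ∀ x₁ ∈ D, ∀ x₂ ∈ D, ‖F' x₁ - F' x₂‖ ≤ L * ‖x₁ - x₂‖)
    (hdiff : ∀ x ∈ D, ∀ h : H, HasDerivAt (fun t : ℝ => F (x + t • h)) (F' x h) 0)
    (x₀ xdag : H) (𝓜 : K) (hxdagD : xdag ∈ D) (hsol : F xdag = 𝓜)
    (w : K)
    (hsource : xdag - x₀ = ContinuousLinearMap.adjoint (F' xdag) w)
    (hsmall : L * ‖w‖ < 1) :
    ∃ C : ℝ, 0 < C ∧
      ∀ α : ℝ, 0 < α →
        ∀ xα ∈ D,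
          IsMinOn (fun x => ‖F x - 𝓜‖ ^ 2 + α * ‖x - x₀‖ ^ 2) D xα →
          ‖xα - xdag‖ ≤ C * Real.sqrt α ∧ ‖F xα - 𝓜‖ ≤ C * α := by
  set ρ := ‖w‖ with hρdef
  have hρ : 0 ≤ ρ := norm_nonneg w
  set S := 1 - L * ρ with hS
  have hS0 : 0 < S := by simp only [hS]; linarith
  refine ⟨ρ / Real.sqrt S + 2 * ρ + 1, by positivity, ?_⟩
  intro α hα xα hxαD hmin
  set d := ‖xα - xdag‖ with hd
  set e := ‖F xα - 𝓜‖ with he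
  have hd0 : 0 ≤ d := norm_nonneg _
  have he0 : 0 ≤ e := norm_nonneg _
  have h1 : e ^ 2 + α * ‖xα - x₀‖ ^ 2 ≤ α * ‖xdag - x₀‖ ^ 2 := by
    have := isMinOn_iff.mp hmin xdag hxdagD
    simpa [hsol] using this
  have h2 : ‖xα - x₀‖ ^ 2 = d ^ 2 + 2 * ⟪xα - xdag, xdag - x₀⟫ + ‖xdag - x₀‖ ^ 2 := by
    have : xα - x₀ = (xα - xdag) + (xdag - x₀) := by abel
    rw [this, norm_add_sq_real]
  have h3 : ⟪xα - xdag, xdag - x₀⟫ = ⟪F' xdag (xα - xdag), w⟫ := by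
    rw [hsource, ContinuousLinearMap.adjoint_inner_right]
  have htay : ‖F xα - F xdag - F' xdag (xα - xdag)‖ ≤ L / 2 * d ^ 2 :=
    taylor_remainder D hD F F' L hLip hdiff hxdagD hxαD
  rw [hsol] at htay
  have h5 : ‖F' xdag (xα - xdag)‖ ≤ e + L / 2 * d ^ 2 := by
    have h5' : ‖F' xdag (xα - xdag)‖ ≤ ‖F xα - 𝓜‖ + ‖F xα - 𝓜 - F' xdag (xα - xdag)‖ := by
      have := norm_sub_le (F xα - 𝓜) (F xα - 𝓜 - F' xdag (xα - xdag))
      simpa using this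
    linarith
  have h6 : -⟪xα - xdag, xdag - x₀⟫ ≤ ρ * e + ρ * (L / 2) * d ^ 2 := by
    have habs : |⟪F' xdag (xα - xdag), w⟫| ≤ ‖F' xdag (xα - xdag)‖ * ρ :=
      abs_real_inner_le_norm _ _
    have hneg := neg_abs_le ⟪F' xdag (xα - xdag), w⟫
    nlinarith [mul_le_mul_of_nonneg_right h5 hρ]
  have key : e ^ 2 - 2 * α * ρ * e + α * S * d ^ 2 ≤ 0 := by
    have hmul := mul_le_mul_of_nonneg_left h6 hα.le
    have h1' := h1
    rw [h2] at h1'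
    simp only [hS]
    nlinarith [h1', hmul]
  have hd2 : α * S * d ^ 2 ≤ α ^ 2 * ρ ^ 2 := by nlinarith [sq_nonneg (e - α * ρ)]
  have hde : e ≤ 2 * ρ * α := by
    rcases eq_or_lt_of_le he0 with h | hpos
    · rw [← h]; positivity
    · have h8 : e * e ≤ (2 * ρ * α) * e := by
        nlinarith [key, mul_nonneg (mul_nonneg hα.le hS0.le) (sq_nonneg d)]
      exact le_of_mul_le_mul_right h8 hpos
  constructor
  · have hdd' : d ^ 2 * S ≤ α * ρ ^ 2 := by
      refine le_of_mul_le_mul_left ?_ hα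
      nlinarith [hd2]
    have hdd : d ^ 2 ≤ (Real.sqrt α * (ρ / Real.sqrt S)) ^ 2 := by
      rw [mul_pow, Real.sq_sqrt hα.le, div_pow, Real.sq_sqrt hS0.le, mul_div_assoc',
        le_div_iff₀ hS0]
      nlinarith [hdd']
    have h7 : d ≤ Real.sqrt α * (ρ / Real.sqrt S) := by
      have := Real.sqrt_le_sqrt hdd
      rwa [Real.sqrt_sq hd0, Real.sqrt_sq (by positivity)] at this
    have hc : ρ / Real.sqrt S ≤ ρ / Real.sqrt S + 2 * ρ + 1 := by linarith
    calc d ≤ Real.sqrt α * (ρ / Real.sqrt S) := h7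
      _ = (ρ / Real.sqrt S) * Real.sqrt α := by ring
      _ ≤ (ρ / Real.sqrt S + 2 * ρ + 1) * Real.sqrt α :=
        mul_le_mul_of_nonneg_right hc (Real.sqrt_nonneg α)
  · have hc : 2 * ρ ≤ ρ / Real.sqrt S + 2 * ρ + 1 := by
      have := div_nonneg hρ (Real.sqrt_nonneg S)
      linarith
    calc e ≤ 2 * ρ * α := hde
      _ = (2 * ρ) * α := by ring
      _ ≤ (ρ / Real.sqrt S + 2 * ρ + 1) * α := mul_le_mul_of_nonneg_right hc hα.le
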